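/- Assume Υ(0) = Υ₀ = n₀/(n₀+1), Υ(1) = 1, σ(0) = 0, σ(1) = γ₁ − 1 with 1 < γ₁ ≤ 2, f(0) > 0, f(1) > 0. If 0 < n₀ ≤ 3, then every interior orbit converges to the fixed point B₂ = (0,1,0) as λ → ∞. If n₀ = 0, then every interior orbit converges to a point of the line L₄ = {(U,1,0) : U ∈ [0,1]} as λ → ∞. -/

import Mathlib

open Set Filter Topology

/-- `H(U,V,Ω) = (1+σ(Ω))V(1−U+σ(Ω)U)`. -/
noncomputable def Hfun (σ : ℝ → ℝ) (U V W : ℝ) : ℝ :=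
  (1 + σ W) * V * (1 - U + σ W * U)

/-- The vector field `F` on the cube `[0,1]³` in coordinates `(U,V,Ω)`. -/
noncomputable def Ffield (Υ σ f : ℝ → ℝ) (U V W : ℝ) : ℝ × ℝ × ℝ :=
  (U * (1 - U) * ((1 - V) * (3 - 4 * U) - Υ W * Hfun σ U V W),
   V * (1 - V) * ((2 * U - 1) * (1 - V + 2 * σ W * V) + (1 - Υ W) * Hfun σ U V W),
   -(f W) * W * (1 - W) * Hfun σ U V W)

set_option maxHeartbeats 1600000

namespace S13

variable {φ φ' q q' : ℝ → ℝ} {T B c : ℝ}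

lemma contOf (hd : ∀ t, HasDerivAt φ (φ' t) t) : Continuous φ :=
  continuous_iff_continuousAt.2 fun t => (hd t).continuousAt

lemma monoTail (hd : ∀ t, HasDerivAt φ (φ' t) t)
    (h0 : ∀ t, T ≤ t → 0 ≤ φ' t) : MonotoneOn φ (Ici T) :=
  monotoneOn_of_deriv_nonneg (convex_Ici T)
    (fun t _ => (hd t).continuousAt.continuousWithinAt)
    (fun t _ => (hd t).differentiableAt.differentiableWithinAt)
    (fun t ht => by
      rw [(hd t).deriv]
      exact h0 t (le_of_lt (by simpa [interior_Ici] using ht)))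

lemma antiTail (hd : ∀ t, HasDerivAt φ (φ' t) t)
    (h0 : ∀ t, T ≤ t → φ' t ≤ 0) : AntitoneOn φ (Ici T) :=
  antitoneOn_of_deriv_nonpos (convex_Ici T)
    (fun t _ => (hd t).continuousAt.continuousWithinAt)
    (fun t _ => (hd t).differentiableAt.differentiableWithinAt)
    (fun t ht => by
      rw [(hd t).deriv]
      exact h0 t (le_of_lt (by simpa [interior_Ici] using ht)))

lemma antiIcc (hd : ∀ t, HasDerivAt φ (φ' t) t) {a b : ℝ}
    (h0 : ∀ t, t ∈ Ioo a b → φ' t ≤ 0) : AntitoneOn φ (Icc a b) :=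
  antitoneOn_of_deriv_nonpos (convex_Icc a b)
    (fun t _ => (hd t).continuousAt.continuousWithinAt)
    (fun t _ => (hd t).differentiableAt.differentiableWithinAt)
    (fun t ht => by
      rw [(hd t).deriv]
      exact h0 t (by simpa [interior_Icc] using ht))

/-- growth on an interval -/
lemma growth_Icc (hd : ∀ t, HasDerivAt φ (φ' t) t) {a b : ℝ} (hab : a ≤ b)
    (hc : ∀ r, r ∈ Icc a b → c ≤ φ' r) : φ a + c * (b - a) ≤ φ b := by
  have hm : MonotoneOn (fun r => φ r - c * r) (Icc a b) := by
    apply monotoneOn_of_deriv_nonneg (convex_Icc a b)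
      (fun t _ => ((hd t).sub (by simpa using (hasDerivAt_id t).const_mul c)).continuousAt.continuousWithinAt)
      (fun t _ => ((hd t).sub (by simpa using (hasDerivAt_id t).const_mul c)).differentiableAt.differentiableWithinAt)
    intro t ht
    rw [((hd t).sub (by simpa using (hasDerivAt_id t).const_mul c)).deriv]
    have := hc t (by rw [interior_Icc] at ht; exact ⟨ht.1.le, ht.2.le⟩)
    linarith
  have := hm (left_mem_Icc.2 hab) (right_mem_Icc.2 hab) hab
  simp only at this
  nlinarith

/-- growth on a tail -/
lemma growth (hd : ∀ t, HasDerivAt φ (φ' t) t)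
    (hc : ∀ r, T ≤ r → c ≤ φ' r) : ∀ t, T ≤ t → φ T + c * (t - T) ≤ φ t := by
  intro t ht
  exact growth_Icc hd ht (fun r hr => hc r hr.1)

lemma false_of_growth (hd : ∀ t, HasDerivAt φ (φ' t) t)
    (hc : ∀ r, T ≤ r → c ≤ φ' r) (hcpos : 0 < c)
    (hb : ∀ t, T ≤ t → φ t ≤ B) : False := by
  set t := max T (T + (B - φ T + 1) / c) with hts
  have h1 : T ≤ t := le_max_left _ _
  have h2 := growth hd hc t h1
  have h3 : φ t ≤ B := hb t h1
  have h4 : (B - φ T + 1) / c ≤ t - T := by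
    have := le_max_right T (T + (B - φ T + 1) / c)
    linarith
  have h5 : B - φ T + 1 ≤ c * (t - T) := by
    rw [div_le_iff₀ hcpos] at h4
    nlinarith
  linarith

/-- tail-monotone and bounded implies convergence -/
lemma tendsto_of_monoTail (hm : MonotoneOn φ (Ici T)) (hb : ∀ t, T ≤ t → φ t ≤ B) :
    ∃ l, l ≤ B ∧ (∀ t, T ≤ t → φ t ≤ l) ∧ Tendsto φ atTop (𝓝 l) := by
  have hne : (φ '' Ici T).Nonempty := ⟨φ T, mem_image_of_mem _ self_mem_Ici⟩
  have hbdd : BddAbove (φ '' Ici T) := ⟨B, by rintro x ⟨t, ht, rfl⟩; exact hb t ht⟩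
  set l := sSup (φ '' Ici T) with hl
  have hub : ∀ t, T ≤ t → φ t ≤ l := fun t ht => le_csSup hbdd (mem_image_of_mem _ ht)
  refine ⟨l, csSup_le hne (by rintro x ⟨t, ht, rfl⟩; exact hb t ht), hub, ?_⟩
  rw [Metric.tendsto_atTop]
  intro ε hε
  obtain ⟨x, hx, hlt⟩ := exists_lt_of_lt_csSup hne (show l - ε < l by linarith)
  obtain ⟨t₀, ht₀, rfl⟩ := hx
  refine ⟨t₀, fun t ht => ?_⟩
  have h1 : φ t₀ ≤ φ t := hm ht₀ (le_trans ht₀ ht) ht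
  have h2 : φ t ≤ l := hub t (le_trans ht₀ ht)
  rw [Real.dist_eq, abs_lt]
  constructor <;> linarith

lemma tendsto_of_antiTail (hm : AntitoneOn φ (Ici T)) (hb : ∀ t, T ≤ t → B ≤ φ t) :
    ∃ l, B ≤ l ∧ (∀ t, T ≤ t → l ≤ φ t) ∧ Tendsto φ atTop (𝓝 l) := by
  obtain ⟨l, h1, h2, h3⟩ := tendsto_of_monoTail (φ := fun t => -φ t) (B := -B)
    (fun a ha b hb' hab => neg_le_neg (hm ha hb' hab)) (fun t ht => neg_le_neg (hb t ht))
  refine ⟨-l, by linarith, fun t ht => by have := h2 t ht; linarith, ?_⟩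
  have := h3.neg
  simpa using this

/-- a barrier lemma: if the derivative is nonpositive whenever `φ ≥ c` (past `t₀`),
then `φ ≤ c` is preserved. -/
lemma barrier (hd : ∀ t, HasDerivAt φ (φ' t) t) {t₀ c : ℝ}
    (h0 : φ t₀ ≤ c) (hder : ∀ t, t₀ ≤ t → c ≤ φ t → φ' t ≤ 0) :
    ∀ t, t₀ ≤ t → φ t ≤ c := by
  intro t₁ ht₁
  by_contra hgt
  push_neg at hgt
  have hne : ({r | r ∈ Icc t₀ t₁ ∧ φ r ≤ c} : Set ℝ).Nonempty := ⟨t₀, ⟨left_mem_Icc.2 ht₁, h0⟩⟩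
  have hbdd : BddAbove {r | r ∈ Icc t₀ t₁ ∧ φ r ≤ c} := ⟨t₁, fun r hr => hr.1.2⟩
  have hcl : IsClosed {r | r ∈ Icc t₀ t₁ ∧ φ r ≤ c} := by
    have heq : {r | r ∈ Icc t₀ t₁ ∧ φ r ≤ c} = Icc t₀ t₁ ∩ φ ⁻¹' (Iic c) := rfl
    rw [heq]
    exact isClosed_Icc.inter ((isClosed_Iic).preimage (contOf hd))
  obtain ⟨⟨ht₂ge, ht₂le⟩, ht₂c⟩ := hcl.csSup_mem hne hbdd
  have ht₂lt : sSup {r | r ∈ Icc t₀ t₁ ∧ φ r ≤ c} < t₁ :=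
    lt_of_le_of_ne ht₂le (fun heq => by rw [heq] at ht₂c; linarith)
  have hmid : ∀ r, r ∈ Ioc (sSup {r | r ∈ Icc t₀ t₁ ∧ φ r ≤ c}) t₁ → c < φ r := by
    intro r hr
    by_contra hle
    push_neg at hle
    exact absurd (le_csSup hbdd ⟨⟨le_trans ht₂ge hr.1.le, hr.2⟩, hle⟩) (not_le.2 hr.1)
  have hanti : AntitoneOn φ (Icc (sSup {r | r ∈ Icc t₀ t₁ ∧ φ r ≤ c}) t₁) := by
    apply antiIcc hd
    intro r hr
    exact hder r (le_trans ht₂ge hr.1.le) (le_of_lt (hmid r ⟨hr.1, hr.2.le⟩))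
  have := hanti (left_mem_Icc.2 ht₂lt.le) (right_mem_Icc.2 ht₂lt.le) ht₂lt.le
  linarith

/-- Barbalat-style visits lemma. -/
lemma visits (hq : ∀ t, HasDerivAt q (q' t) t) {K : ℝ} (hK : ∀ t, -K ≤ q' t) (hKpos : 0 < K)
    (hd : ∀ t, HasDerivAt φ (φ' t) t) (hφmono : ∀ t, T ≤ t → 0 ≤ φ' t)
    (hb : ∀ t, T ≤ t → φ t ≤ B)
    {δ η : ℝ} (hδ : 0 < δ) (hη : 0 < η)
    (himp : ∀ t, T ≤ t → δ / 2 ≤ q t → η ≤ φ' t) :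
    ∃ T', T ≤ T' ∧ ∀ t, T' ≤ t → q t < δ := by
  by_contra h
  push_neg at h
  have hτpos : 0 < δ / (2 * K) := by positivity
  have hne : (φ '' Ici T).Nonempty := ⟨φ T, mem_image_of_mem _ self_mem_Ici⟩
  have hbdd : BddAbove (φ '' Ici T) := ⟨B, by rintro x ⟨t, ht, rfl⟩; exact hb t ht⟩
  have hlt : sSup (φ '' Ici T) - η * (δ / (2 * K)) < sSup (φ '' Ici T) := by nlinarith
  obtain ⟨x, hx, hxlt⟩ := exists_lt_of_lt_csSup hne hlt
  obtain ⟨t₀, ht₀, rfl⟩ := hx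
  obtain ⟨t, hht, hqt⟩ := h t₀ ht₀
  have htT : T ≤ t := le_trans ht₀ hht
  -- q stays ≥ δ/2 on [t, t + τ]
  have hqlow : ∀ r, r ∈ Icc t (t + δ / (2 * K)) → δ / 2 ≤ q r := by
    intro r hr
    have hgr := growth_Icc hq hr.1 (fun m _ => hK m)
    have : -K * (r - t) ≥ -K * (δ / (2 * K)) := by
      have : r - t ≤ δ / (2 * K) := by linarith [hr.2]
      nlinarith
    have hKδ : -K * (δ / (2 * K)) = -(δ / 2) := by field_simp
    nlinarith
  have hgrow := growth_Icc hd (le_of_lt (by linarith : t < t + δ / (2 * K)))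
    (fun r hr => himp r (le_trans htT hr.1) (hqlow r hr))
  have h1 : φ t₀ ≤ φ t := monoTail hd hφmono ht₀ htT hht
  have h2 : φ (t + δ / (2 * K)) ≤ sSup (φ '' Ici T) :=
    le_csSup hbdd (mem_image_of_mem _ (by simp only [mem_Ici]; linarith))
  have h3 : η * (t + δ / (2 * K) - t) = η * (δ / (2 * K)) := by ring_nf
  nlinarith

lemma logit_deriv {r D : ℝ → ℝ} (hd : ∀ t, HasDerivAt r (r t * (1 - r t) * D t) t)
    (h0 : ∀ t, 0 < r t) (h1 : ∀ t, r t < 1) :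
    ∀ t, HasDerivAt (fun t => Real.log (r t) - Real.log (1 - r t)) (D t) t := by
  intro t
  have hne : r t ≠ 0 := ne_of_gt (h0 t)
  have hne1 : (1:ℝ) - r t ≠ 0 := ne_of_gt (by linarith [h1 t])
  have H1 := (hd t).log hne
  have H2 := ((hasDerivAt_const t (1:ℝ)).sub (hd t)).log hne1
  refine (H1.sub H2).congr_deriv ?_
  simp only [Pi.sub_apply]
  field_simp
  ring


/-- Bundled orbit context with distilled analytic constants. -/
structure Orb where
  Ups : ℝ → ℝ
  sig : ℝ → ℝ
  ff : ℝ → ℝ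
  u : ℝ → ℝ
  v : ℝ → ℝ
  w : ℝ → ℝ
  hσnn : ∀ x ∈ Icc (0:ℝ) 1, 0 ≤ sig x
  hΥnn : ∀ x ∈ Icc (0:ℝ) 1, 0 ≤ Ups x
  hu : ∀ t, HasDerivAt u (u t * (1 - u t) *
    ((1 - v t) * (3 - 4 * u t) - Ups (w t) * ((1 + sig (w t)) * v t * (1 - u t + sig (w t) * u t)))) t
  hv : ∀ t, HasDerivAt v (v t * (1 - v t) *
    ((2 * u t - 1) * (1 - v t + 2 * sig (w t) * v t) + (1 - Ups (w t)) * ((1 + sig (w t)) * v t * (1 - u t + sig (w t) * u t)))) t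
  hw : ∀ t, HasDerivAt w (-(ff (w t)) * w t * (1 - w t) * ((1 + sig (w t)) * v t * (1 - u t + sig (w t) * u t))) t
  hint : ∀ t, u t ∈ Ioo (0:ℝ) 1 ∧ v t ∈ Ioo (0:ℝ) 1 ∧ w t ∈ Ioo (0:ℝ) 1
  m : ℝ
  Mf : ℝ
  S : ℝ
  P : ℝ
  L : ℝ
  hm : 0 < m
  hmf : ∀ x ∈ Icc (0:ℝ) 1, m ≤ ff x
  hMf : ∀ x ∈ Icc (0:ℝ) 1, ff x ≤ Mf
  hS : ∀ x ∈ Icc (0:ℝ) 1, sig x ≤ S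
  hP : ∀ x ∈ Icc (0:ℝ) 1, Ups x ≤ P
  hL : 0 < L
  hsigL : ∀ x ∈ Icc (0:ℝ) 1, sig x ≤ L * x
  hUpsL : ∀ x ∈ Icc (0:ℝ) 1, |Ups x - Ups 0| ≤ L * x

namespace Orb

variable (c : Orb)

/-- H along the orbit -/
noncomputable def hh (t : ℝ) : ℝ := (1 + c.sig (c.w t)) * c.v t * (1 - c.u t + c.sig (c.w t) * c.u t)
noncomputable def s (t : ℝ) : ℝ := c.sig (c.w t)
noncomputable def p (t : ℝ) : ℝ := c.Ups (c.w t)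
noncomputable def fw (t : ℝ) : ℝ := c.ff (c.w t)
/-- the `x'` bracket -/
noncomputable def xA (t : ℝ) : ℝ := (1 - c.v t) * (3 - 4 * c.u t) - c.p t * c.hh t
/-- the `y'` bracket -/
noncomputable def yB (t : ℝ) : ℝ := (2 * c.u t - 1) * (1 - c.v t + 2 * c.s t * c.v t) + (1 - c.p t) * c.hh t
noncomputable def xx (t : ℝ) : ℝ := Real.log (c.u t) - Real.log (1 - c.u t)
noncomputable def yy (t : ℝ) : ℝ := Real.log (c.v t) - Real.log (1 - c.v t)
noncomputable def zz (t : ℝ) : ℝ := Real.log (c.w t) - Real.log (1 - c.w t)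
noncomputable def gg (t : ℝ) : ℝ := c.xx t + 3 * c.yy t

lemma u0 (t : ℝ) : 0 < c.u t := (c.hint t).1.1
lemma u1 (t : ℝ) : c.u t < 1 := (c.hint t).1.2
lemma v0 (t : ℝ) : 0 < c.v t := (c.hint t).2.1.1
lemma v1 (t : ℝ) : c.v t < 1 := (c.hint t).2.1.2
lemma w0 (t : ℝ) : 0 < c.w t := (c.hint t).2.2.1
lemma w1 (t : ℝ) : c.w t < 1 := (c.hint t).2.2.2
lemma wIcc (t : ℝ) : c.w t ∈ Icc (0:ℝ) 1 := ⟨(c.w0 t).le, (c.w1 t).le⟩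

lemma s_nn (t : ℝ) : 0 ≤ c.s t := c.hσnn _ (c.wIcc t)
lemma p_nn (t : ℝ) : 0 ≤ c.p t := c.hΥnn _ (c.wIcc t)
lemma s_le_S (t : ℝ) : c.s t ≤ c.S := c.hS _ (c.wIcc t)
lemma p_le_P (t : ℝ) : c.p t ≤ c.P := c.hP _ (c.wIcc t)
lemma S_nn : 0 ≤ c.S := le_trans (c.s_nn 0) (c.s_le_S 0)
lemma P_nn : 0 ≤ c.P := le_trans (c.p_nn 0) (c.p_le_P 0)
lemma s_le_Lw (t : ℝ) : c.s t ≤ c.L * c.w t := c.hsigL _ (c.wIcc t)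
lemma p_near (t : ℝ) : |c.p t - c.Ups 0| ≤ c.L * c.w t := c.hUpsL _ (c.wIcc t)
lemma fw_ge (t : ℝ) : c.m ≤ c.fw t := c.hmf _ (c.wIcc t)
lemma fw_le (t : ℝ) : c.fw t ≤ c.Mf := c.hMf _ (c.wIcc t)

lemma hh_pos (t : ℝ) : 0 < c.hh t := by
  have h1 := c.u0 t; have h2 := c.u1 t; have h3 := c.v0 t
  have h4 := c.s_nn t
  have : 0 < 1 - c.u t + c.s t * c.u t := by nlinarith
  have : 0 < 1 + c.s t := by linarith
  unfold hh
  show 0 < (1 + c.s t) * c.v t * (1 - c.u t + c.s t * c.u t)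
  positivity

lemma hh_ge_v1u (t : ℝ) : c.v t * (1 - c.u t) ≤ c.hh t := by
  have h1 := c.u0 t; have h2 := c.u1 t; have h3 := c.v0 t
  have h4 := c.s_nn t
  unfold hh; show _ ≤ (1 + c.s t) * c.v t * (1 - c.u t + c.s t * c.u t)
  nlinarith [mul_nonneg h3.le h4, mul_nonneg (mul_nonneg h3.le (mul_nonneg h4 h4)) h1.le]

lemma hh_le (t : ℝ) : c.hh t ≤ (1 + c.S) ^ 2 * c.v t := by
  have h1 := c.u0 t; have h2 := c.u1 t; have h3 := c.v0 t; have hv1 := c.v1 t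
  have h4 := c.s_nn t; have h5 := c.s_le_S t; have h6 := c.S_nn
  have h7 : 0 ≤ 1 - c.u t + c.s t * c.u t := by nlinarith
  have e3 : (1 + c.s t) * (1 - c.u t + c.s t * c.u t) ≤ (1 + c.S) ^ 2 := by
    calc (1 + c.s t) * (1 - c.u t + c.s t * c.u t)
        ≤ (1 + c.S) * (1 - c.u t + c.s t * c.u t) := by nlinarith
      _ ≤ (1 + c.S) * (1 + c.S) := by nlinarith [mul_le_mul_of_nonneg_right h5 h1.le, mul_le_of_le_one_right h6 h2.le]
      _ = (1 + c.S) ^ 2 := by ring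
  have := mul_le_mul_of_nonneg_left e3 h3.le
  unfold hh; show (1 + c.s t) * c.v t * (1 - c.u t + c.s t * c.u t) ≤ _
  nlinarith

lemma hh_le' (t : ℝ) : c.hh t ≤ (1 + c.S) ^ 2 := by
  have h := c.hh_le t; have hv1 := c.v1 t; have h6 := c.S_nn
  nlinarith [sq_nonneg (1 + c.S)]

/-- s·v ≤ h -/
lemma sv_le (t : ℝ) : c.s t * c.v t ≤ c.hh t := by
  have h1 := c.u0 t; have h2 := c.u1 t; have h3 := c.v0 t
  have h4 := c.s_nn t
  have hA : c.s t ≤ (1 + c.s t) * (1 - c.u t + c.s t * c.u t) := by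
    nlinarith [mul_nonneg (mul_nonneg h4 h4) h1.le]
  unfold hh; show _ ≤ (1 + c.s t) * c.v t * (1 - c.u t + c.s t * c.u t)
  nlinarith

lemma hu' : ∀ t, HasDerivAt c.u (c.u t * (1 - c.u t) * c.xA t) t := by
  intro t; have := c.hu t; unfold xA p hh; exact this

lemma hv' : ∀ t, HasDerivAt c.v (c.v t * (1 - c.v t) * c.yB t) t := by
  intro t; have := c.hv t; unfold yB p s hh; exact this

lemma hw' : ∀ t, HasDerivAt c.w (c.w t * (1 - c.w t) * (-(c.fw t) * c.hh t)) t := by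
  intro t; have := c.hw t
  have heq : c.w t * (1 - c.w t) * (-(c.fw t) * c.hh t)
      = -(c.ff (c.w t)) * c.w t * (1 - c.w t) * ((1 + c.sig (c.w t)) * c.v t * (1 - c.u t + c.sig (c.w t) * c.u t)) := by
    unfold fw hh; ring
  rw [heq]; exact this

lemma hx : ∀ t, HasDerivAt c.xx (c.xA t) t :=
  logit_deriv c.hu' c.u0 c.u1

lemma hy : ∀ t, HasDerivAt c.yy (c.yB t) t :=
  logit_deriv c.hv' c.v0 c.v1

lemma hz : ∀ t, HasDerivAt c.zz (-(c.fw t) * c.hh t) t :=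
  logit_deriv c.hw' c.w0 c.w1

lemma hg : ∀ t, HasDerivAt c.gg (c.xA t + 3 * c.yB t) t := by
  intro t
  exact ((c.hx t).add ((c.hy t).const_mul 3))

lemma g_id (t : ℝ) : c.xA t + 3 * c.yB t
    = 2 * c.u t * (1 - c.v t) + 6 * c.s t * (2 * c.u t - 1) * c.v t + (3 - 4 * c.p t) * c.hh t := by
  unfold xA yB; ring

lemma w_deriv_nonpos (t : ℝ) : c.w t * (1 - c.w t) * (-(c.fw t) * c.hh t) ≤ 0 := by
  have h0 := c.w0 t; have h1 := c.w1 t; have h2 := c.hh_pos t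
  have h3 := lt_of_lt_of_le c.hm (c.fw_ge t)
  nlinarith [mul_nonneg (mul_nonneg h0.le (by linarith : (0:ℝ) ≤ 1 - c.w t)) (mul_nonneg h3.le h2.le)]

lemma w_mono {t₁ t₂ : ℝ} (h : t₁ ≤ t₂) : c.w t₂ ≤ c.w t₁ :=
  antiTail c.hw' (fun t _ => c.w_deriv_nonpos t) (self_mem_Ici (a := t₁)) h h

lemma z_mono {t₁ t₂ : ℝ} (h : t₁ ≤ t₂) : c.zz t₂ ≤ c.zz t₁ := by
  refine antiTail c.hz (fun t _ => ?_) (self_mem_Ici (a := t₁)) h h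
  have h2 := c.hh_pos t
  have h3 := lt_of_lt_of_le c.hm (c.fw_ge t)
  nlinarith [mul_nonneg h3.le h2.le]

/-- barrier: once `u ≤ 3/4` it stays so. -/
lemma u_barrier {t₀ : ℝ} (h : c.u t₀ ≤ 3/4) : ∀ t, t₀ ≤ t → c.u t ≤ 3/4 := by
  refine barrier c.hu' h (fun t _ hge => ?_)
  have h1 := c.u0 t; have h2 := c.u1 t; have h3 := c.v0 t; have h4 := c.v1 t
  have h5 := c.hh_pos t; have h6 := c.p_nn t
  have hxA : c.xA t ≤ 0 := by
    unfold xA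
    nlinarith
  nlinarith [mul_nonneg (mul_nonneg h1.le (by linarith : (0:ℝ) ≤ 1 - c.u t)) (neg_nonneg.2 hxA)]

/-- if `u > 3/4` on a tail then `u` is antitone there -/
lemma u_anti_of_gt {T : ℝ} (hgt : ∀ t, T ≤ t → (3:ℝ)/4 ≤ c.u t) : AntitoneOn c.u (Ici T) := by
  refine antiTail c.hu' (fun t ht => ?_)
  have hge := hgt t ht
  have h1 := c.u0 t; have h2 := c.u1 t; have h3 := c.v0 t; have h4 := c.v1 t
  have h5 := c.hh_pos t; have h6 := c.p_nn t
  have hxA : c.xA t ≤ 0 := by unfold xA; nlinarith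
  nlinarith [mul_nonneg (mul_nonneg h1.le (by linarith : (0:ℝ) ≤ 1 - c.u t)) (neg_nonneg.2 hxA)]

lemma xA_abs (t : ℝ) : |c.xA t| ≤ 3 + c.P * (1 + c.S) ^ 2 := by
  have h1 := c.u0 t; have h2 := c.u1 t; have h3 := c.v0 t; have h4 := c.v1 t
  have h5 := c.hh_pos t; have h6 := c.p_nn t; have h7 := c.p_le_P t
  have h8 := c.hh_le' t; have h9 := c.P_nn; have h10 := c.S_nn
  have hph : 0 ≤ c.p t * c.hh t := mul_nonneg h6 h5.le
  have hph2 : c.p t * c.hh t ≤ c.P * (1 + c.S) ^ 2 := by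
    calc c.p t * c.hh t ≤ c.P * c.hh t := by nlinarith
      _ ≤ c.P * (1 + c.S) ^ 2 := by nlinarith
  rw [abs_le]; unfold xA
  constructor <;> nlinarith

lemma yB_abs (t : ℝ) : |c.yB t| ≤ (1 + 2 * c.S) + (1 + c.P) * (1 + c.S) ^ 2 := by
  have h1 := c.u0 t; have h2 := c.u1 t; have h3 := c.v0 t; have h4 := c.v1 t
  have h5 := c.hh_pos t; have h6 := c.p_nn t; have h7 := c.p_le_P t
  have h8 := c.hh_le' t; have h9 := c.P_nn; have h10 := c.S_nn
  have hs1 := c.s_nn t; have hs2 := c.s_le_S t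
  have e1 : 0 ≤ 1 - c.v t + 2 * c.s t * c.v t := by nlinarith
  have e2 : 1 - c.v t + 2 * c.s t * c.v t ≤ 1 + 2 * c.S := by nlinarith
  have e3 : |(2 * c.u t - 1) * (1 - c.v t + 2 * c.s t * c.v t)| ≤ 1 + 2 * c.S := by
    rw [abs_le]; constructor <;> nlinarith
  have e4 : |(1 - c.p t) * c.hh t| ≤ (1 + c.P) * (1 + c.S) ^ 2 := by
    rw [abs_le]; constructor <;> nlinarith
  rw [abs_le] at *
  unfold yB
  constructor <;> nlinarith [e3.1, e3.2, e4.1, e4.2]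

lemma amfh (a : ℝ) (ha : 0 ≤ a) (t : ℝ) : a * c.hh t ≤ a / c.m * (c.fw t * c.hh t) := by
  have h5 := (c.hh_pos t).le; have hf := c.fw_ge t; have hm := c.hm
  have h1 : a * c.m ≤ a * c.fw t := mul_le_mul_of_nonneg_left hf ha
  rw [div_mul_eq_mul_div, le_div_iff₀ c.hm]
  nlinarith [mul_le_mul_of_nonneg_right h1 h5]

lemma xx_le (t : ℝ) (h : c.u t ≤ 3/4) : c.xx t ≤ Real.log 3 := by
  have h1 := c.u0 t; have h2 := c.u1 t
  have e1 : Real.log (c.u t) ≤ Real.log (3/4) := Real.log_le_log h1 h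
  have e2 : Real.log (1/4 : ℝ) ≤ Real.log (1 - c.u t) :=
    Real.log_le_log (by norm_num) (by linarith)
  have e3 : Real.log (3/4 : ℝ) - Real.log (1/4 : ℝ) = Real.log 3 := by
    rw [← Real.log_div (by norm_num) (by norm_num)]
    norm_num
  unfold xx; linarith

lemma v_half_of_yy (t : ℝ) (h : 0 ≤ c.yy t) : 1/2 ≤ c.v t := by
  have h3 := c.v0 t; have h4 := c.v1 t
  have h5 : Real.log (1 - c.v t) ≤ Real.log (c.v t) := by unfold yy at h; linarith
  have := (Real.log_le_log_iff (by linarith) h3).1 h5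
  linarith

/-- In any scenario where `v ≥ 1/2` on a tail but `h`-budget is finite, contradiction. -/
lemma v_big_contra {ε T₃ a : ℝ} (hε : 0 < ε) (hlb : ∀ t, ε ≤ c.w t)
    (ha : 0 < a) (hv : ∀ t, T₃ ≤ t → 1/2 ≤ c.v t) (hu : ∀ t, T₃ ≤ t → a ≤ 1 - c.u t) :
    False := by
  have hzlb : ∀ t, Real.log ε ≤ c.zz t := by
    intro t
    have h0 := c.w0 t; have h1 := c.w1 t
    have e1 : Real.log ε ≤ Real.log (c.w t) := Real.log_le_log hε (hlb t)
    have e2 : Real.log (1 - c.w t) ≤ 0 := Real.log_nonpos (by linarith) (by linarith)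
    unfold zz; linarith
  -- Ψ := -(1/(a*m)) * zz has Ψ' ≥ v/... ≥ 1/2·a/a = ... we use Ψ' ≥ hh/a ≥ v(1-u)/a ≥ v ≥ 1/2
  have hder : ∀ t, HasDerivAt (fun t => -(1/(a * c.m)) * c.zz t)
      (-(1/(a * c.m)) * (-(c.fw t) * c.hh t)) t := fun t => (c.hz t).const_mul _
  refine false_of_growth (T := T₃) (B := 1/(a * c.m) * |Real.log ε|) hder ?_ (by norm_num : (0:ℝ) < 1/2) ?_
  · intro r hr
    have h5 := c.hh_pos r; have hf := c.fw_ge r; have hm := c.hm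
    have hge := c.hh_ge_v1u r
    have hvr := hv r hr; have hur := hu r hr
    have h3 := c.v0 r; have h2 := c.u1 r
    have key : a / 2 ≤ c.hh r := by nlinarith
    have e2 : a * c.m * (1/2) ≤ c.fw r * c.hh r := by nlinarith
    have e3 : -(1/(a * c.m)) * (-(c.fw r) * c.hh r) = (c.fw r * c.hh r) / (a * c.m) := by
      field_simp
    rw [e3, le_div_iff₀ (mul_pos ha c.hm)]
    linarith
  · intro t _
    have h1 : -c.zz t ≤ -Real.log ε := by linarith [hzlb t]
    have hpos : (0:ℝ) < 1/(a * c.m) := one_div_pos.2 (mul_pos ha c.hm)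
    calc -(1/(a * c.m)) * c.zz t = (1/(a * c.m)) * (-c.zz t) := by ring
      _ ≤ (1/(a * c.m)) * (-Real.log ε) := mul_le_mul_of_nonneg_left h1 hpos.le
      _ ≤ (1/(a * c.m)) * |Real.log ε| := mul_le_mul_of_nonneg_left (neg_le_abs _) hpos.le

lemma exists_tail_ge {ψ : ℝ → ℝ} {T κ : ℝ} (hκ : 0 < κ)
    (hg : ∀ t, T ≤ t → ψ T + κ * (t - T) ≤ ψ t) (M : ℝ) :
    ∃ T₃, T ≤ T₃ ∧ ∀ t, T₃ ≤ t → M ≤ ψ t := by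
  refine ⟨max T (T + (M - ψ T)/κ), le_max_left _ _, fun t ht => ?_⟩
  have h1 : T ≤ t := le_trans (le_max_left _ _) ht
  have h2 : T + (M - ψ T)/κ ≤ t := le_trans (le_max_right _ _) ht
  have h3 := hg t h1
  have h4 : (M - ψ T)/κ ≤ t - T := by linarith
  rw [div_le_iff₀ hκ] at h4
  have h6 : κ * (t - T) = (t - T) * κ := mul_comm _ _
  linarith

lemma zz_lb {ε : ℝ} (hε : 0 < ε) (hlb : ∀ t, ε ≤ c.w t) (t : ℝ) : Real.log ε ≤ c.zz t := by
  have h0 := c.w0 t; have h1 := c.w1 t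
  have e1 : Real.log ε ≤ Real.log (c.w t) := Real.log_le_log hε (hlb t)
  have e2 : Real.log (1 - c.w t) ≤ 0 := Real.log_nonpos (by linarith) (by linarith)
  unfold zz; linarith

/-- Case A : `w` bounded below by a positive constant is impossible. -/
lemma caseA {ε : ℝ} (hε : 0 < ε) (hlb : ∀ t, ε ≤ c.w t) : False := by
  have hzlb := c.zz_lb hε hlb
  have hm := c.hm
  have hPnn := c.P_nn
  by_cases hc : ∃ t₀, c.u t₀ ≤ 3/4
  case neg =>
    push_neg at hc
    have hgt : ∀ t, (0:ℝ) ≤ t → (3:ℝ)/4 ≤ c.u t := fun t _ => (hc t).le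
    have hanti := c.u_anti_of_gt hgt
    set c₁ := 1 - c.u 0 with hc₁def
    have hc₁pos : 0 < c₁ := by rw [hc₁def]; linarith [c.u1 0]
    have hc₁ : ∀ t, (0:ℝ) ≤ t → c₁ ≤ 1 - c.u t := by
      intro t ht
      have := hanti self_mem_Ici (mem_Ici.2 ht) ht
      rw [hc₁def]; linarith
    set coef := (1 + c.P)/c.m + 1/(2 * c₁ * c.m) with hcoefdef
    have hcoefnn : 0 ≤ coef := by
      have h2 : 0 ≤ (1 + c.P)/c.m := by positivity
      have h3 : 0 ≤ 1/(2 * c₁ * c.m) := by positivity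
      rw [hcoefdef]; linarith
    have hder : ∀ t, HasDerivAt (fun t => c.yy t - coef * c.zz t)
        (c.yB t - coef * (-(c.fw t) * c.hh t)) t := fun t => (c.hy t).sub ((c.hz t).const_mul coef)
    have hgrow : ∀ t, (0:ℝ) ≤ t → (c.yy 0 - coef * c.zz 0) + 1/2 * (t - 0) ≤ c.yy t - coef * c.zz t := by
      refine growth hder (fun r hr => ?_)
      have h1 := c.u0 r; have h2 := c.u1 r; have h3 := c.v0 r; have h4 := c.v1 r
      have h5 := c.hh_pos r; have h6 := c.p_nn r; have h7 := c.p_le_P r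
      have hs1 := c.s_nn r
      have hur := (hc r).le; have hu14 := hc₁ r hr
      have hA := c.amfh (1 + c.P) (by linarith) r
      have hA2 := c.amfh (1/(2*c₁)) (by positivity) r
      have hgev := c.hh_ge_v1u r
      have e2 : coef * (-(c.fw r) * c.hh r)
          = -((1 + c.P)/c.m * (c.fw r * c.hh r)) - 1/(2*c₁)/c.m * (c.fw r * c.hh r) := by
        rw [hcoefdef, div_div]; ring
      have hyB : (1/2) * (1 - c.v r) - (1 + c.P) * c.hh r ≤ c.yB r := by
        unfold yB
        have e4 : -(c.P * c.hh r) ≤ (1 - c.p r) * c.hh r := by nlinarith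
        have e5 : (1/2) * (1 - c.v r) ≤ (2 * c.u r - 1) * (1 - c.v r + 2 * c.s r * c.v r) := by
          nlinarith [mul_nonneg (by linarith : (0:ℝ) ≤ 2 * c.u r - 1) (mul_nonneg hs1 h3.le)]
        nlinarith
      have hv2 : c.v r / 2 ≤ 1/(2*c₁) * c.hh r := by
        have e6 : c₁ * c.v r ≤ c.v r * (1 - c.u r) := by nlinarith
        have e7 : 1/(2*c₁) * c.hh r = c.hh r / (2 * c₁) := by ring
        rw [e7, le_div_iff₀ (by linarith)]
        nlinarith
      rw [e2]; linarith
    obtain ⟨T₃, hT₃0, hT₃⟩ := exists_tail_ge (ψ := fun t => c.yy t - coef * c.zz t) (T := 0) (by norm_num : (0:ℝ) < 1/2) hgrow (-(coef * Real.log ε))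
    have hvh : ∀ t, T₃ ≤ t → 1/2 ≤ c.v t := by
      intro t ht
      have hy1 := hT₃ t ht
      have hy2 : coef * Real.log ε ≤ coef * c.zz t := mul_le_mul_of_nonneg_left (hzlb t) hcoefnn
      exact c.v_half_of_yy t (by linarith)
    exact c.v_big_contra hε hlb hc₁pos hvh (fun t ht => hc₁ t (le_trans hT₃0 ht))
  case pos =>
    obtain ⟨t₀, ht₀⟩ := hc
    have hub : ∀ t, t₀ ≤ t → c.u t ≤ 3/4 := c.u_barrier ht₀
    have hΦd : ∀ t, HasDerivAt (fun t => c.xx t - c.P/c.m * c.zz t)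
        (c.xA t - c.P/c.m * (-(c.fw t) * c.hh t)) t := fun t => (c.hx t).sub ((c.hz t).const_mul (c.P/c.m))
    have hΦmono : ∀ t, t₀ ≤ t → 0 ≤ c.xA t - c.P/c.m * (-(c.fw t) * c.hh t) := by
      intro t ht
      have e0 : 0 ≤ (1 - c.v t) * (3 - 4 * c.u t) :=
        mul_nonneg (by linarith [c.v1 t]) (by linarith [hub t ht])
      have e1 : c.p t * c.hh t ≤ c.P * c.hh t :=
        mul_le_mul_of_nonneg_right (c.p_le_P t) (c.hh_pos t).le
      have hA := c.amfh c.P c.P_nn t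
      have e2 : c.P/c.m * (-(c.fw t) * c.hh t) = -(c.P/c.m * (c.fw t * c.hh t)) := by ring
      unfold xA; rw [e2]; linarith
    have hΦbd : ∀ t, t₀ ≤ t → c.xx t - c.P/c.m * c.zz t ≤ Real.log 3 + c.P/c.m * |Real.log ε| := by
      intro t ht
      have h1 := c.xx_le t (hub t ht)
      have hcm : (0:ℝ) ≤ c.P/c.m := by positivity
      have h2 : -(c.P/c.m * c.zz t) ≤ c.P/c.m * |Real.log ε| := by
        calc -(c.P/c.m * c.zz t) = c.P/c.m * (-c.zz t) := by ring
          _ ≤ c.P/c.m * (-Real.log ε) := mul_le_mul_of_nonneg_left (by linarith [hzlb t]) hcm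
          _ ≤ c.P/c.m * |Real.log ε| := mul_le_mul_of_nonneg_left (neg_le_abs _) hcm
      linarith
    obtain ⟨l₁, -, hubl₁, hten₁⟩ := tendsto_of_monoTail (monoTail hΦd hΦmono) hΦbd
    have hzanti : AntitoneOn c.zz (Ici t₀) := fun a _ b _ hab => c.z_mono hab
    obtain ⟨lz, -, -, htenz⟩ := tendsto_of_antiTail hzanti (fun t _ => hzlb t)
    have htenx : Tendsto c.xx atTop (𝓝 (l₁ + c.P/c.m * lz)) := by
      have hrepx : c.xx = fun t => (c.xx t - c.P/c.m * c.zz t) + c.P/c.m * c.zz t := by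
        funext t; ring
      rw [hrepx]
      exact hten₁.add (htenz.const_mul _)
    have hrep : ∀ t, c.u t = Real.exp (c.xx t) / (1 + Real.exp (c.xx t)) := by
      intro t
      have h1 := c.u0 t; have h2 := c.u1 t
      have he : Real.exp (c.xx t) = c.u t / (1 - c.u t) := by
        unfold xx; rw [Real.exp_sub, Real.exp_log h1, Real.exp_log (by linarith)]
      rw [he]
      have hne : (1:ℝ) - c.u t ≠ 0 := by linarith
      field_simp
      ring
    set ℓ := l₁ + c.P/c.m * lz with hℓ
    have hexp : Tendsto (fun t => Real.exp (c.xx t)) atTop (𝓝 (Real.exp ℓ)) :=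
      (Real.continuous_exp.tendsto ℓ).comp htenx
    have htendu : Tendsto c.u atTop (𝓝 (Real.exp ℓ / (1 + Real.exp ℓ))) := by
      have hne : (1 : ℝ) + Real.exp ℓ ≠ 0 := by positivity
      exact ((hexp.div (tendsto_const_nhds.add hexp) hne)).congr (fun t => (hrep t).symm)
    set udag := Real.exp ℓ / (1 + Real.exp ℓ) with hudagdef
    have hudag34 : udag ≤ 3/4 := le_of_tendsto htendu (eventually_atTop.2 ⟨t₀, hub⟩)
    by_cases hsplit : udag < 3/4
    · set d := (3/4 - udag)/2 with hd
      have hdpos : 0 < d := by rw [hd]; linarith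
      obtain ⟨N, hN⟩ := Metric.tendsto_atTop.1 htendu d hdpos
      set T₂ := max N t₀ with hT₂
      have hu4d : ∀ t, T₂ ≤ t → 4 * d ≤ 3 - 4 * c.u t := by
        intro t ht
        have hd2 := hN t (le_trans (le_max_left _ _) ht)
        rw [Real.dist_eq, abs_lt] at hd2
        rw [hd]; rw [hd] at hd2; linarith [hd2.2]
      have hΘd : ∀ t, HasDerivAt (fun t => c.xx t - c.P/c.m * c.zz t - 4/c.m * c.zz t)
          (c.xA t - c.P/c.m * (-(c.fw t) * c.hh t) - 4/c.m * (-(c.fw t) * c.hh t)) t :=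
        fun t => (hΦd t).sub ((c.hz t).const_mul (4/c.m))
      refine false_of_growth (T := T₂)
        (B := Real.log 3 + c.P/c.m * |Real.log ε| + 4/c.m * |Real.log ε|) hΘd ?_
        (lt_min (by linarith) one_pos : (0:ℝ) < min (4*d) 1) ?_
      · intro r hr
        have h1 := c.u0 r; have h2 := c.u1 r; have h3 := c.v0 r; have h4 := c.v1 r
        have h5 := c.hh_pos r; have h6 := c.p_nn r; have h7 := c.p_le_P r
        have hgev := c.hh_ge_v1u r
        have hu34 := hub r (le_trans (le_max_right _ _) hr)
        have h4d := hu4d r hr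
        have hA := c.amfh c.P c.P_nn r
        have hA4 := c.amfh 4 (by norm_num) r
        have e1 : c.p r * c.hh r ≤ c.P * c.hh r :=
          mul_le_mul_of_nonneg_right h7 h5.le
        have e2 : c.P/c.m * (-(c.fw r) * c.hh r) = -(c.P/c.m * (c.fw r * c.hh r)) := by ring
        have e3 : 4/c.m * (-(c.fw r) * c.hh r) = -(4/c.m * (c.fw r * c.hh r)) := by ring
        have e4 : 4 * d * (1 - c.v r) ≤ (1 - c.v r) * (3 - 4 * c.u r) := by
          nlinarith
        have e5 : c.v r ≤ 4 * c.hh r := by nlinarith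
        have e6 : min (4*d) 1 ≤ 4 * d * (1 - c.v r) + c.v r := by
          rcases le_total (4*d) 1 with hmin | hmin
          · rw [min_eq_left hmin]; nlinarith
          · rw [min_eq_right hmin]; nlinarith
        unfold xA; rw [e2, e3]; linarith
      · intro t ht
        have hb1 := hΦbd t (le_trans (le_max_right _ _) ht)
        have hcm : (0:ℝ) ≤ 4/c.m := by positivity
        have h2 : -(4/c.m * c.zz t) ≤ 4/c.m * |Real.log ε| := by
          calc -(4/c.m * c.zz t) = 4/c.m * (-c.zz t) := by ring
            _ ≤ 4/c.m * (-Real.log ε) := mul_le_mul_of_nonneg_left (by linarith [hzlb t]) hcm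
            _ ≤ 4/c.m * |Real.log ε| := mul_le_mul_of_nonneg_left (neg_le_abs _) hcm
        linarith
    · have hudag_eq : udag = 3/4 := le_antisymm hudag34 (not_lt.1 hsplit)
      obtain ⟨N, hN⟩ := Metric.tendsto_atTop.1 htendu (1/8) (by norm_num)
      set T₂ := max N t₀ with hT₂
      have hu58 : ∀ t, T₂ ≤ t → 5/8 ≤ c.u t := by
        intro t ht
        have hd2 := hN t (le_trans (le_max_left _ _) ht)
        rw [Real.dist_eq, abs_lt, hudag_eq] at hd2
        linarith [hd2.1]
      set coef := (1 + c.P)/c.m + 1/c.m with hcoefdef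
      have hcoefnn : 0 ≤ coef := by
        have h2 : 0 ≤ (1 + c.P)/c.m := by positivity
        have h3 : 0 ≤ 1/c.m := by positivity
        rw [hcoefdef]; linarith
      have hder : ∀ t, HasDerivAt (fun t => c.yy t - coef * c.zz t)
          (c.yB t - coef * (-(c.fw t) * c.hh t)) t := fun t => (c.hy t).sub ((c.hz t).const_mul coef)
      have hgrow : ∀ t, T₂ ≤ t → (c.yy T₂ - coef * c.zz T₂) + 1/4 * (t - T₂) ≤ c.yy t - coef * c.zz t := by
        refine growth hder (fun r hr => ?_)
        have h1 := c.u0 r; have h2 := c.u1 r; have h3 := c.v0 r; have h4 := c.v1 r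
        have h5 := c.hh_pos r; have h6 := c.p_nn r; have h7 := c.p_le_P r
        have hs1 := c.s_nn r
        have hur := hu58 r hr
        have hu34 := hub r (le_trans (le_max_right _ _) hr)
        have hA := c.amfh (1 + c.P) (by linarith) r
        have hA1 := c.amfh 1 (by norm_num) r
        have hgev := c.hh_ge_v1u r
        have e2 : coef * (-(c.fw r) * c.hh r)
            = -((1 + c.P)/c.m * (c.fw r * c.hh r)) - 1/c.m * (c.fw r * c.hh r) := by
          rw [hcoefdef]; ring
        have hyB : (1/4) * (1 - c.v r) - (1 + c.P) * c.hh r ≤ c.yB r := by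
          unfold yB
          have e4 : -(c.P * c.hh r) ≤ (1 - c.p r) * c.hh r := by nlinarith
          have e5 : (1/4) * (1 - c.v r) ≤ (2 * c.u r - 1) * (1 - c.v r + 2 * c.s r * c.v r) := by
            nlinarith [mul_nonneg (by linarith : (0:ℝ) ≤ 2 * c.u r - 1) (mul_nonneg hs1 h3.le)]
          nlinarith
        have hv4 : c.v r / 4 ≤ c.hh r := by nlinarith
        rw [e2]; linarith
      obtain ⟨T₃, hT₃ge, hT₃⟩ := exists_tail_ge (ψ := fun t => c.yy t - coef * c.zz t) (T := T₂) (by norm_num : (0:ℝ) < 1/4) hgrow (-(coef * Real.log ε))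
      have hvh : ∀ t, T₃ ≤ t → 1/2 ≤ c.v t := by
        intro t ht
        have hy1 := hT₃ t ht
        have hy2 : coef * Real.log ε ≤ coef * c.zz t := mul_le_mul_of_nonneg_left (hzlb t) hcoefnn
        exact c.v_half_of_yy t (by linarith)
      refine c.v_big_contra hε hlb (by norm_num : (0:ℝ) < 1/4) hvh (fun t ht => ?_)
      have := hub t (le_trans (le_trans (le_max_right N t₀) hT₃ge) ht)
      linarith

lemma w_small {ε : ℝ} (hε : 0 < ε) : ∃ T, ∀ t, T ≤ t → c.w t < ε := by
  by_cases h : ∃ t₀, c.w t₀ < ε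
  · obtain ⟨t₀, h₀⟩ := h
    exact ⟨t₀, fun t ht => lt_of_le_of_lt (c.w_mono ht) h₀⟩
  · push_neg at h
    exact (c.caseA hε h).elim

lemma w_tendsto : Tendsto c.w atTop (𝓝 0) := by
  rw [Metric.tendsto_atTop]
  intro ε hε
  obtain ⟨T, hT⟩ := c.w_small hε
  refine ⟨T, fun t ht => ?_⟩
  rw [Real.dist_eq, abs_lt]
  have := hT t ht; have := c.w0 t
  constructor <;> linarith

lemma exp_xx (t : ℝ) : Real.exp (c.xx t) = c.u t / (1 - c.u t) := by
  have h1 := c.u0 t; have h2 := c.u1 t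
  unfold xx; rw [Real.exp_sub, Real.exp_log h1, Real.exp_log (by linarith)]

lemma u_lb_of_xx {t θ : ℝ} (hθpos : 0 < θ) (hθ : Real.log θ ≤ c.xx t) :
    θ * (1 - c.u t) ≤ c.u t := by
  have h1 := c.u0 t; have h2 := c.u1 t
  have h3 : θ ≤ c.u t / (1 - c.u t) := by
    rw [← Real.exp_log hθpos, ← c.exp_xx t]
    exact Real.exp_le_exp.2 hθ
  rw [le_div_iff₀ (by linarith)] at h3
  linarith

lemma xx_ge_of_gg {t γ' : ℝ} (hg : γ' ≤ c.gg t) : γ' + 3 * Real.log (1 - c.v t) ≤ c.xx t := by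
  have h3 := c.v0 t; have h4 := c.v1 t
  have hyyle : c.yy t ≤ -Real.log (1 - c.v t) := by
    have hlogv : Real.log (c.v t) ≤ 0 := Real.log_nonpos h3.le h4.le
    unfold yy; linarith
  unfold gg at hg; linarith

/-- derivative of `q = u(1-v)` -/
lemma hq' (t : ℝ) : HasDerivAt (fun t => c.u t * (1 - c.v t))
    (c.u t * (1 - c.u t) * c.xA t * (1 - c.v t) + c.u t * (0 - c.v t * (1 - c.v t) * c.yB t)) t :=
  (c.hu' t).mul ((hasDerivAt_const t 1).sub (c.hv' t))

lemma hq'_lb (t : ℝ) :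
    -((3 + c.P * (1 + c.S)^2) + ((1 + 2*c.S) + (1 + c.P) * (1 + c.S)^2))
      ≤ c.u t * (1 - c.u t) * c.xA t * (1 - c.v t) + c.u t * (0 - c.v t * (1 - c.v t) * c.yB t) := by
  have h1 := c.u0 t; have h2 := c.u1 t; have h3 := c.v0 t; have h4 := c.v1 t
  have ha := abs_le.1 (c.xA_abs t); have hb := abs_le.1 (c.yB_abs t)
  have e1 : c.u t * (1 - c.u t) * (1 - c.v t) ≤ 1 := by
    nlinarith [mul_nonneg (by nlinarith [sq_nonneg (c.u t - 1/2)] : (0:ℝ) ≤ 1/4 - c.u t * (1 - c.u t)) (by linarith : (0:ℝ) ≤ 1 - c.v t)]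
  have e0 : 0 ≤ c.u t * (1 - c.u t) * (1 - c.v t) := by
    have : (0:ℝ) ≤ 1 - c.u t := by linarith
    have : (0:ℝ) ≤ 1 - c.v t := by linarith
    positivity
  have e2 : c.u t * c.v t * (1 - c.v t) ≤ 1 := by
    nlinarith [mul_nonneg (by nlinarith [sq_nonneg (c.v t - 1/2)] : (0:ℝ) ≤ 1/4 - c.v t * (1 - c.v t)) h1.le,
      mul_nonneg (mul_nonneg h3.le (by linarith : (0:ℝ) ≤ 1 - c.v t)) (by linarith : (0:ℝ) ≤ 1 - c.u t)]
  have e0' : 0 ≤ c.u t * c.v t * (1 - c.v t) := by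
    have : (0:ℝ) ≤ 1 - c.v t := by linarith
    positivity
  have hKnn : (0:ℝ) ≤ (3 + c.P * (1 + c.S)^2) := by
    nlinarith [mul_nonneg c.P_nn (sq_nonneg (1 + c.S))]
  have hKnn' : (0:ℝ) ≤ ((1 + 2*c.S) + (1 + c.P) * (1 + c.S)^2) := by
    nlinarith [mul_nonneg (by linarith [c.P_nn] : (0:ℝ) ≤ 1 + c.P) (sq_nonneg (1 + c.S)), c.S_nn]
  nlinarith [mul_le_mul_of_nonneg_left ha.1 e0, mul_le_mul_of_nonneg_left hb.2 e0',
    mul_le_mul_of_nonneg_left e1 hKnn, mul_le_mul_of_nonneg_left e2 hKnn']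

/-- the monotone quantity in case B: `G = g - (32L/m) w`. -/
lemma hGd (t : ℝ) : HasDerivAt (fun t => c.gg t - 32 * c.L / c.m * c.w t)
    ((c.xA t + 3 * c.yB t) - 32 * c.L / c.m * (c.w t * (1 - c.w t) * (-(c.fw t) * c.hh t))) t :=
  (c.hg t).sub ((c.hw' t).const_mul (32 * c.L / c.m))

lemma G_deriv_lb (h34 : c.Ups 0 ≤ 3/4) {T₁ : ℝ} (hT₁ : ∀ t, T₁ ≤ t → c.w t < 1/2) :
    ∀ t, T₁ ≤ t → 2 * c.u t * (1 - c.v t) ≤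
      (c.xA t + 3 * c.yB t) - 32 * c.L / c.m * (c.w t * (1 - c.w t) * (-(c.fw t) * c.hh t)) := by
  intro t ht
  have h1 := c.u0 t; have h2 := c.u1 t; have h3 := c.v0 t; have h4 := c.v1 t
  have h5 := c.hh_pos t; have hw0 := c.w0 t; have hw1 := hT₁ t ht
  have hsL := c.s_le_Lw t; have hs0 := c.s_nn t
  have hpn := abs_le.1 (c.p_near t)
  have hLpos := c.hL; have hm := c.hm; have hfwge := c.fw_ge t
  have hfw0 : 0 < c.fw t := lt_of_lt_of_le hm hfwge
  have hgev := c.hh_ge_v1u t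
  rw [c.g_id t]
  have hsign : -(32 * c.L / c.m * (c.w t * (1 - c.w t) * (-(c.fw t) * c.hh t)))
      = 32 * c.L / c.m * (c.w t * (1 - c.w t) * (c.fw t * c.hh t)) := by ring
  have e5 : 16 * c.m ≤ 32 * (1 - c.w t) * c.fw t := by nlinarith
  have hpot : 16 * c.L * (c.w t * c.hh t)
      ≤ 32 * c.L / c.m * (c.w t * (1 - c.w t) * (c.fw t * c.hh t)) := by
    rw [div_mul_eq_mul_div, le_div_iff₀ hm]
    nlinarith [mul_le_mul_of_nonneg_left e5
      (show (0:ℝ) ≤ c.L * (c.w t * c.hh t) by positivity)]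
  have hpterm : -(4 * c.L * (c.w t * c.hh t)) ≤ (3 - 4 * c.p t) * c.hh t := by
    have e9 : -(4 * (c.L * c.w t)) ≤ 3 - 4 * c.p t := by
      have := hpn.2; nlinarith
    nlinarith [mul_le_mul_of_nonneg_right e9 h5.le]
  have hsterm : -(6 * c.L * (c.w t * c.hh t)) ≤ 6 * c.s t * (2 * c.u t - 1) * c.v t := by
    rcases le_total (1/2 : ℝ) (c.u t) with hu | hu
    · nlinarith [mul_nonneg (mul_nonneg hs0 (by linarith : (0:ℝ) ≤ 2 * c.u t - 1)) h3.le,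
        mul_nonneg (mul_nonneg hLpos.le hw0.le) h5.le]
    · have e6 : c.s t * ((1 - c.u t) * c.v t) ≤ c.L * c.w t * ((1 - c.u t) * c.v t) :=
        mul_le_mul_of_nonneg_right hsL (mul_nonneg (by linarith) h3.le)
      have e7 : c.L * c.w t * (c.v t * (1 - c.u t)) ≤ c.L * c.w t * c.hh t :=
        mul_le_mul_of_nonneg_left hgev (mul_nonneg hLpos.le hw0.le)
      have e8 : c.s t * ((1 - 2 * c.u t) * c.v t) ≤ c.s t * ((1 - c.u t) * c.v t) := by
        apply mul_le_mul_of_nonneg_left _ hs0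
        nlinarith
      nlinarith
  have hslack : 0 ≤ 6 * c.L * (c.w t * c.hh t) := by positivity
  linarith [hsign, hpot, hpterm, hsterm, hslack]

/-- case B : `v → 1`. -/
lemma v_tendsto (h34 : c.Ups 0 ≤ 3/4) : Tendsto c.v atTop (𝓝 1) := by
  obtain ⟨T₁, hT₁⟩ := c.w_small (by norm_num : (0:ℝ) < 1/2)
  have hGlb := c.G_deriv_lb h34 hT₁
  have hGmono : ∀ t, T₁ ≤ t → 0 ≤
      (c.xA t + 3 * c.yB t) - 32 * c.L / c.m * (c.w t * (1 - c.w t) * (-(c.fw t) * c.hh t)) := by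
    intro t ht
    have h' := hGlb t ht
    nlinarith [mul_nonneg (c.u0 t).le (by linarith [c.v1 t] : (0:ℝ) ≤ 1 - c.v t)]
  by_contra hnot
  rw [Metric.tendsto_atTop] at hnot
  push_neg at hnot
  obtain ⟨ε, hεpos, hvis⟩ := hnot
  have hvis' : ∀ N, ∃ t, N ≤ t ∧ ε ≤ 1 - c.v t := by
    intro N
    obtain ⟨t, ht, hd⟩ := hvis N
    refine ⟨t, ht, ?_⟩
    rw [Real.dist_eq] at hd
    have h4 := c.v1 t
    rw [abs_of_nonpos (by linarith)] at hd
    linarith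
  by_cases hbd : ∃ B, ∀ t, T₁ ≤ t → c.gg t - 32 * c.L / c.m * c.w t ≤ B
  · obtain ⟨B, hB⟩ := hbd
    have hγlow : ∀ t, T₁ ≤ t →
        c.gg T₁ - 32 * c.L / c.m * c.w T₁ ≤ c.gg t := by
      intro t ht
      have h1 : c.gg T₁ - 32 * c.L / c.m * c.w T₁ ≤ c.gg t - 32 * c.L / c.m * c.w t :=
        (monoTail c.hGd hGmono) self_mem_Ici (mem_Ici.2 ht) ht
      have h2 : 0 ≤ 32 * c.L / c.m * c.w t :=
        mul_nonneg (div_nonneg (by linarith [c.hL] : (0:ℝ) ≤ 32 * c.L) c.hm.le) (c.w0 t).le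
      linarith
    set γ := c.gg T₁ - 32 * c.L / c.m * c.w T₁ with hγdef
    set c₂ := Real.exp γ / (1 + Real.exp γ) with hc₂
    have hc₂pos : 0 < c₂ := by rw [hc₂]; positivity
    set δ := c₂ * ε^4 with hδ
    have hδpos : 0 < δ := by rw [hδ]; positivity
    have hqvisit : ∀ N, ∃ t, N ≤ t ∧ δ ≤ c.u t * (1 - c.v t) := by
      intro N
      obtain ⟨t, ht, hεv⟩ := hvis' (max N T₁)
      have htT₁ : T₁ ≤ t := le_trans (le_max_right _ _) ht
      have h1 := c.u0 t; have h2 := c.u1 t; have h3 := c.v0 t; have h4 := c.v1 t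
      have hxxge := c.xx_ge_of_gg (hγlow t htT₁)
      have h1v : (0:ℝ) < 1 - c.v t := by linarith
      have hθpos : (0:ℝ) < Real.exp γ * (1 - c.v t)^3 :=
        mul_pos (Real.exp_pos γ) (pow_pos h1v 3)
      have hlogθ : Real.log (Real.exp γ * (1 - c.v t)^3) = γ + 3 * Real.log (1 - c.v t) := by
        rw [Real.log_mul (Real.exp_ne_zero _) (ne_of_gt (pow_pos h1v 3)), Real.log_exp, Real.log_pow]
        push_cast; ring
      have hul := c.u_lb_of_xx hθpos (by rw [hlogθ]; exact hxxge)
      have hpow : (1 - c.v t)^3 ≤ 1 := pow_le_one₀ (by linarith) (by linarith)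
      have hθle : Real.exp γ * (1 - c.v t)^3 ≤ Real.exp γ := by
        nlinarith [mul_nonneg (by linarith : (0:ℝ) ≤ 1 - (1 - c.v t)^3) (Real.exp_pos γ).le]
      have huge : c₂ * (1 - c.v t)^3 ≤ c.u t := by
        rw [hc₂, div_mul_eq_mul_div, div_le_iff₀ (by positivity)]
        nlinarith [mul_le_mul_of_nonneg_right hθle h1.le]
      refine ⟨t, le_trans (le_max_left _ _) ht, ?_⟩
      rw [hδ]
      have hε4 : ε^4 ≤ (1 - c.v t)^4 := pow_le_pow_left₀ hεpos.le hεv 4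
      have e1 : c₂ * (1 - c.v t)^3 * (1 - c.v t) ≤ c.u t * (1 - c.v t) :=
        mul_le_mul_of_nonneg_right huge (by linarith)
      nlinarith [mul_le_mul_of_nonneg_left hε4 hc₂pos.le]
    set K := (3 + c.P * (1 + c.S)^2) + ((1 + 2*c.S) + (1 + c.P) * (1 + c.S)^2) with hK
    have hKpos : 0 < K := by
      rw [hK]
      nlinarith [mul_nonneg c.P_nn (sq_nonneg (1 + c.S)),
        mul_nonneg (by linarith [c.P_nn] : (0:ℝ) ≤ 1 + c.P) (sq_nonneg (1 + c.S)), c.S_nn]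
    have hKlb : ∀ t, -K ≤ c.u t * (1 - c.u t) * c.xA t * (1 - c.v t)
        + c.u t * (0 - c.v t * (1 - c.v t) * c.yB t) := by
      intro t; rw [hK]; exact c.hq'_lb t
    obtain ⟨T', hT'T, hT'⟩ := visits (T := T₁) (B := B)
      (q := fun t => c.u t * (1 - c.v t)) c.hq' hKlb hKpos c.hGd hGmono hB hδpos hδpos
      (fun t ht hq => by
        have h' := hGlb t ht
        have h2 : δ ≤ 2 * (c.u t * (1 - c.v t)) := by linarith
        nlinarith)
    obtain ⟨t, ht, hqt⟩ := hqvisit T'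
    exact absurd hqt (not_le.2 (hT' t ht))
  · push_neg at hbd
    have hgbig : ∀ Bb : ℝ, ∃ T₂, T₁ ≤ T₂ ∧ ∀ t, T₂ ≤ t → Bb ≤ c.gg t := by
      intro Bb
      obtain ⟨t₂, ht₂, hBt₂⟩ := hbd Bb
      refine ⟨t₂, ht₂, fun t ht => ?_⟩
      have h1 : c.gg t₂ - 32 * c.L / c.m * c.w t₂ ≤ c.gg t - 32 * c.L / c.m * c.w t :=
        (monoTail c.hGd hGmono) (mem_Ici.2 ht₂) (mem_Ici.2 (le_trans ht₂ ht)) ht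
      have h2 : 0 ≤ 32 * c.L / c.m * c.w t :=
        mul_nonneg (div_nonneg (by linarith [c.hL] : (0:ℝ) ≤ 32 * c.L) c.hm.le) (c.w0 t).le
      linarith
    by_cases hcc : ∃ s₀, T₁ ≤ s₀ ∧ c.u s₀ ≤ 3/4
    · obtain ⟨s₀, hs₀T, hs₀u⟩ := hcc
      have hub := c.u_barrier hs₀u
      obtain ⟨T₂, hT₂T₁, hT₂⟩ := hgbig (Real.log 7 - 3 * Real.log ε)
      obtain ⟨t, ht, hεv⟩ := hvis' (max T₂ s₀)
      have h2 := c.u1 t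
      have hxxge := c.xx_ge_of_gg (hT₂ t (le_trans (le_max_left _ _) ht))
      have hlog : Real.log 7 ≤ c.xx t := by
        have e1 : Real.log ε ≤ Real.log (1 - c.v t) := Real.log_le_log hεpos hεv
        linarith
      have hul := c.u_lb_of_xx (by norm_num : (0:ℝ) < 7) hlog
      have := hub t (le_trans (le_max_right _ _) ht)
      linarith
    · push_neg at hcc
      have hanti := c.u_anti_of_gt (T := T₁) (fun t ht => (hcc t ht).le)
      set δ' := (1 - c.u T₁)/2 with hδ'
      have hδ'pos : 0 < δ' := by rw [hδ']; linarith [c.u1 T₁]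
      have hδ'lt : δ' < 1 := by rw [hδ']; linarith [c.u0 T₁]
      have hfrac : (0:ℝ) < (1 - δ')/δ' := div_pos (by linarith) hδ'pos
      obtain ⟨T₂, hT₂T₁, hT₂⟩ := hgbig (Real.log ((1 - δ')/δ') - 3 * Real.log ε)
      obtain ⟨t, ht, hεv⟩ := hvis' T₂
      have hxxge := c.xx_ge_of_gg (hT₂ t ht)
      have hlog : Real.log ((1 - δ')/δ') ≤ c.xx t := by
        have e1 : Real.log ε ≤ Real.log (1 - c.v t) := Real.log_le_log hεpos hεv
        linarith
      have hul := c.u_lb_of_xx hfrac hlog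
      have h2 := c.u1 t; have h1 := c.u0 t
      have hut : 1 - δ' ≤ c.u t := by
        rw [div_mul_eq_mul_div, div_le_iff₀ hδ'pos] at hul
        nlinarith
      have hmono := hanti self_mem_Ici (mem_Ici.2 (le_trans hT₂T₁ ht)) (le_trans hT₂T₁ ht)
      rw [hδ'] at hut
      linarith [c.u1 T₁]

lemma xx_ge34 (t : ℝ) (h : 3/4 ≤ c.u t) : Real.log 3 ≤ c.xx t := by
  have h1 := c.u0 t; have h2 := c.u1 t
  have e1 : Real.log (3/4 : ℝ) ≤ Real.log (c.u t) := Real.log_le_log (by norm_num) h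
  have e2 : Real.log (1 - c.u t) ≤ Real.log (1/4 : ℝ) :=
    Real.log_le_log (by linarith) (by linarith)
  have e3 : Real.log (3/4 : ℝ) - Real.log (1/4 : ℝ) = Real.log 3 := by
    rw [← Real.log_div (by norm_num) (by norm_num)]; norm_num
  unfold xx; linarith

lemma zz_small : ∀ M : ℝ, ∃ T, ∀ t, T ≤ t → c.zz t ≤ M := by
  intro M
  obtain ⟨T, hT⟩ := c.w_small (lt_min one_half_pos (Real.exp_pos (M - Real.log 2)))
  refine ⟨T, fun t ht => ?_⟩
  have hw := hT t ht; have h0 := c.w0 t; have h1 := c.w1 t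
  have e1 : Real.log (c.w t) ≤ M - Real.log 2 := by
    have e := Real.log_lt_log h0 (lt_of_lt_of_le hw (min_le_right _ _))
    rw [Real.log_exp] at e
    exact e.le
  have hw2 : c.w t < 1/2 := lt_of_lt_of_le hw (min_le_left _ _)
  have e2 : -Real.log (1 - c.w t) ≤ Real.log 2 := by
    have e : Real.log (1/2 : ℝ) ≤ Real.log (1 - c.w t) :=
      Real.log_le_log (by norm_num) (by linarith)
    have h12 : Real.log (1/2 : ℝ) = -Real.log 2 := by
      rw [show (1/2 : ℝ) = 2⁻¹ by norm_num, Real.log_inv]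
    linarith
  unfold zz; linarith

lemma u_le_exp_xx (t : ℝ) : c.u t ≤ Real.exp (c.xx t) := by
  have h1 := c.u0 t; have h2 := c.u1 t
  rw [c.exp_xx t, le_div_iff₀ (by linarith)]
  nlinarith

lemma u_tendsto_of_xx {l : ℝ} (h : Tendsto c.xx atTop (𝓝 l)) :
    Tendsto c.u atTop (𝓝 (Real.exp l / (1 + Real.exp l))) := by
  have hrep : ∀ t, c.u t = Real.exp (c.xx t) / (1 + Real.exp (c.xx t)) := by
    intro t
    have h1 := c.u0 t; have h2 := c.u1 t
    rw [c.exp_xx t]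
    have hne : (1:ℝ) - c.u t ≠ 0 := by linarith
    field_simp
    ring
  have hexp : Tendsto (fun t => Real.exp (c.xx t)) atTop (𝓝 (Real.exp l)) :=
    (Real.continuous_exp.tendsto l).comp h
  have hne : (1 : ℝ) + Real.exp l ≠ 0 := by positivity
  exact ((hexp.div (tendsto_const_nhds.add hexp) hne)).congr (fun t => (hrep t).symm)

/-- `0 < Υ₀ ≤ 3/4` : `u → 0`. -/
lemma u_to_zero (h34 : c.Ups 0 ≤ 3/4) (hpos : 0 < c.Ups 0) : Tendsto c.u atTop (𝓝 0) := by
  have hL := c.hL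
  obtain ⟨Tw, hTw⟩ := c.w_small (show (0:ℝ) < c.Ups 0/(2*c.L) by positivity)
  have hpge : ∀ t, Tw ≤ t → c.Ups 0 / 2 ≤ c.p t := by
    intro t ht
    have h1 := (abs_le.1 (c.p_near t)).1
    have h2 := hTw t ht
    have h3 : c.L * c.w t ≤ c.L * (c.Ups 0/(2*c.L)) := mul_le_mul_of_nonneg_left h2.le hL.le
    have h4 : c.L * (c.Ups 0/(2*c.L)) = c.Ups 0 / 2 := by field_simp
    linarith
  obtain ⟨Tv, hTv⟩ := Metric.tendsto_atTop.1 (c.v_tendsto h34)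
    (min (1/4) (c.Ups 0/64)) (lt_min (by norm_num) (by positivity))
  have hvge : ∀ t, Tv ≤ t → 3/4 ≤ c.v t ∧ 1 - c.v t ≤ c.Ups 0/64 := by
    intro t ht
    have hd := hTv t ht
    rw [Real.dist_eq, abs_lt] at hd
    constructor
    · have := min_le_left (1/4 : ℝ) (c.Ups 0/64); linarith [hd.1]
    · have := min_le_right (1/4 : ℝ) (c.Ups 0/64); linarith [hd.1]
  set T₂ := max Tw Tv with hT₂
  by_cases hcc : ∃ s₀, T₂ ≤ s₀ ∧ c.u s₀ ≤ 3/4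
  · -- main case : u ≤ 3/4 on a tail, then x' ≤ -3Υ₀/64
    obtain ⟨s₀, hs₀T, hs₀u⟩ := hcc
    have hub := c.u_barrier hs₀u
    set κ := 3 * c.Ups 0 / 64 with hκ
    have hκpos : 0 < κ := by rw [hκ]; positivity
    have hxA : ∀ t, s₀ ≤ t → κ ≤ -c.xA t := by
      intro t ht
      have h1 := c.u0 t; have h2 := c.u1 t; have h3 := c.v0 t; have h4 := c.v1 t
      have h5 := c.hh_pos t
      have hu34 := hub t ht
      have hwt : Tw ≤ t := le_trans (le_trans (le_max_left _ _) hs₀T) ht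
      have hvt : Tv ≤ t := le_trans (le_trans (le_max_right _ _) hs₀T) ht
      have hp2 := hpge t hwt
      have hv34 := (hvge t hvt).1
      have hv64 := (hvge t hvt).2
      have hhge : 3/16 ≤ c.hh t := by nlinarith [c.hh_ge_v1u t]
      have hph : c.Ups 0/2 * (3/16) ≤ c.p t * c.hh t := by
        apply mul_le_mul hp2 hhge (by norm_num) (c.p_nn t)
      have he : (1 - c.v t) * (3 - 4 * c.u t) ≤ 3 * (1 - c.v t) := by nlinarith
      unfold xA
      rw [hκ]
      nlinarith
    have hgr := growth (φ := fun t => -c.xx t) (φ' := fun t => -c.xA t)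
      (fun t => (c.hx t).neg) (fun r hr => hxA r hr)
    rw [Metric.tendsto_atTop]
    intro ε hε
    set T₆ := max s₀ (s₀ + (c.xx s₀ - Real.log (ε/2))/κ) with hT₆
    refine ⟨T₆, fun t ht => ?_⟩
    have h1 : s₀ ≤ t := le_trans (le_max_left _ _) ht
    have h2 : s₀ + (c.xx s₀ - Real.log (ε/2))/κ ≤ t := le_trans (le_max_right _ _) ht
    have h3 : -c.xx s₀ + κ * (t - s₀) ≤ -c.xx t := hgr t h1
    have h4 : (c.xx s₀ - Real.log (ε/2))/κ ≤ t - s₀ := by linarith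
    rw [div_le_iff₀ hκpos] at h4
    have hcomm : κ * (t - s₀) = (t - s₀) * κ := mul_comm _ _
    have h5 : c.xx t ≤ Real.log (ε/2) := by linarith
    have h6 : c.u t ≤ ε/2 := by
      have := c.u_le_exp_xx t
      have e := Real.exp_le_exp.2 h5
      rw [Real.exp_log (by linarith)] at e
      linarith
    rw [Real.dist_eq, abs_lt]
    have := c.u0 t
    constructor <;> linarith
  · -- u > 3/4 on the tail : impossible since x decreases by -Υ₀/2 ∫h → -∞
    push_neg at hcc
    exfalso
    have hMf0 : 0 < c.Mf := lt_of_lt_of_le c.hm (le_trans (le_refl _) (le_trans (c.fw_ge 0) (c.fw_le 0)))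
    set coef := c.Ups 0 / (2 * c.Mf) with hcoef
    have hcoefpos : 0 < coef := by rw [hcoef]; positivity
    have hΔd : ∀ t, HasDerivAt (fun t => c.xx t - coef * c.zz t)
        (c.xA t - coef * (-(c.fw t) * c.hh t)) t :=
      fun t => (c.hx t).sub ((c.hz t).const_mul coef)
    have hΔanti : AntitoneOn (fun t => c.xx t - coef * c.zz t) (Ici T₂) := by
      refine antiTail hΔd (fun t ht => ?_)
      have h1 := c.u0 t; have h2 := c.u1 t; have h3 := c.v0 t; have h4 := c.v1 t
      have h5 := c.hh_pos t
      have hu34 : 3/4 ≤ c.u t := (hcc t ht).le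
      have hp2 := hpge t (le_trans (le_max_left _ _) ht)
      have hxAle : c.xA t ≤ -(c.Ups 0/2) * c.hh t := by
        unfold xA
        have e1 : (1 - c.v t) * (3 - 4 * c.u t) ≤ 0 :=
          mul_nonpos_of_nonneg_of_nonpos (by linarith) (by linarith)
        nlinarith [mul_le_mul_of_nonneg_right hp2 h5.le]
      have hcf : coef * (c.fw t * c.hh t) ≤ c.Ups 0/2 * c.hh t := by
        have e1 : c.fw t * c.hh t ≤ c.Mf * c.hh t :=
          mul_le_mul_of_nonneg_right (c.fw_le t) h5.le
        have e2 : coef * (c.fw t * c.hh t) ≤ coef * (c.Mf * c.hh t) :=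
          mul_le_mul_of_nonneg_left e1 hcoefpos.le
        have e3 : coef * (c.Mf * c.hh t) = c.Ups 0/2 * c.hh t := by
          rw [hcoef]; field_simp
        linarith
      nlinarith
    obtain ⟨T₃, hT₃⟩ := c.zz_small ((Real.log 3 - 1 - (c.xx T₂ - coef * c.zz T₂))/coef)
    set t := max T₂ T₃ with ht
    have h1 : T₂ ≤ t := le_max_left _ _
    have h2 : (fun t => c.xx t - coef * c.zz t) t ≤ c.xx T₂ - coef * c.zz T₂ :=
      hΔanti self_mem_Ici (mem_Ici.2 h1) h1
    have h3 := hT₃ t (le_max_right _ _)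
    have h4 : coef * c.zz t ≤ coef * ((Real.log 3 - 1 - (c.xx T₂ - coef * c.zz T₂))/coef) :=
      mul_le_mul_of_nonneg_left h3 hcoefpos.le
    rw [mul_div_cancel₀ _ (ne_of_gt hcoefpos)] at h4
    have h5 : Real.log 3 ≤ c.xx t := c.xx_ge34 t (hcc t h1).le
    simp only at h2
    linarith

/-- `Υ₀ = 0` : `u` converges to something in `[0,1]`. -/
lemma u_converges (hU0 : c.Ups 0 = 0) : ∃ l ∈ Icc (0:ℝ) 1, Tendsto c.u atTop (𝓝 l) := by
  have hL := c.hL; have hm := c.hm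
  have h34 : c.Ups 0 ≤ 3/4 := by rw [hU0]; norm_num
  have hple : ∀ t, c.p t ≤ c.L * c.w t := by
    intro t; have h := (abs_le.1 (c.p_near t)).2; rw [hU0] at h; linarith
  obtain ⟨Tw, hTw⟩ := c.w_small
    (show (0:ℝ) < min (1/2) (1/(128 * c.L)) from lt_min one_half_pos (by positivity))
  obtain ⟨Tv, hTv⟩ := Metric.tendsto_atTop.1 (c.v_tendsto h34) (1/64) (by norm_num)
  have hvge : ∀ t, Tv ≤ t → 1 - c.v t ≤ 1/64 := fun t ht => by
    have hd := hTv t ht; rw [Real.dist_eq, abs_lt] at hd; linarith [hd.1]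
  set T₄ := max Tw Tv with hT₄def
  have hLw : ∀ t, T₄ ≤ t → c.L * c.w t ≤ 1/128 := by
    intro t ht
    have h2 := hTw t (le_trans (le_max_left _ _) ht)
    have h3 : c.L * c.w t ≤ c.L * (1/(128*c.L)) :=
      mul_le_mul_of_nonneg_left (le_of_lt (lt_of_lt_of_le h2 (min_le_right _ _))) hL.le
    have h4 : c.L * (1/(128*c.L)) = 1/128 := by field_simp
    linarith
  have hw12 : ∀ t, T₄ ≤ t → c.w t < 1/2 := fun t ht =>
    lt_of_lt_of_le (hTw t (le_trans (le_max_left _ _) ht)) (min_le_left _ _)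
  have hv64 : ∀ t, T₄ ≤ t → 1 - c.v t ≤ 1/64 := fun t ht =>
    hvge t (le_trans (le_max_right _ _) ht)
  have key : ∃ c₃, 0 < c₃ ∧ ∃ T₅, T₄ ≤ T₅ ∧ ∀ t, T₅ ≤ t → c₃ ≤ c.yB t := by
    by_cases hcc : ∃ s₀, T₄ ≤ s₀ ∧ c.u s₀ ≤ 3/4
    · obtain ⟨s₀, hs₀T, hs₀u⟩ := hcc
      have hub := c.u_barrier hs₀u
      refine ⟨1/16, by norm_num, s₀, hs₀T, fun t ht => ?_⟩
      have htT₄ : T₄ ≤ t := le_trans hs₀T ht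
      have h1 := c.u0 t; have h2 := c.u1 t; have h3 := c.v0 t; have h4 := c.v1 t
      have hs0 := c.s_nn t; have hp0 := c.p_nn t
      have hsw := le_trans (c.s_le_Lw t) (hLw t htT₄)
      have hpw := le_trans (hple t) (hLw t htT₄)
      have hv := hv64 t htT₄
      have hu34 := hub t ht
      have hX0 : (0:ℝ) ≤ 1 - c.v t + 2 * c.s t * c.v t := by
        nlinarith [mul_nonneg hs0 h3.le]
      have hsv : c.s t * c.v t ≤ c.s t := mul_le_of_le_one_right hs0 h4.le
      have hfirst : -(1 - c.v t + 2 * c.s t * c.v t) ≤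
          (2 * c.u t - 1) * (1 - c.v t + 2 * c.s t * c.v t) := by
        nlinarith [mul_nonneg (by linarith : (0:ℝ) ≤ 2 * c.u t) hX0]
      have hhge : (3:ℝ)/16 ≤ c.hh t := by nlinarith [c.hh_ge_v1u t]
      have hsecond : (1/2 : ℝ) * (3/16) ≤ (1 - c.p t) * c.hh t :=
        mul_le_mul (by linarith) hhge (by norm_num) (by linarith)
      unfold yB
      nlinarith
    · push_neg at hcc
      have hanti := c.u_anti_of_gt (T := T₄) (fun t ht => (hcc t ht).le)
      have ha₀ : 0 < 1 - c.u T₄ := by linarith [c.u1 T₄]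
      refine ⟨3 * (1 - c.u T₄)/8, by linarith, T₄, le_refl _, fun t ht => ?_⟩
      have h1 := c.u0 t; have h2 := c.u1 t; have h3 := c.v0 t; have h4 := c.v1 t
      have hs0 := c.s_nn t; have hp0 := c.p_nn t
      have hpw := le_trans (hple t) (hLw t ht)
      have hv := hv64 t ht
      have hu34 := (hcc t ht).le
      have hut : c.u t ≤ c.u T₄ := hanti self_mem_Ici (mem_Ici.2 ht) ht
      have hX0 : (0:ℝ) ≤ 1 - c.v t + 2 * c.s t * c.v t := by
        nlinarith [mul_nonneg hs0 h3.le]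
      have hfirst : (0:ℝ) ≤ (2 * c.u t - 1) * (1 - c.v t + 2 * c.s t * c.v t) :=
        mul_nonneg (by linarith) hX0
      have hhge : (3:ℝ)/4 * (1 - c.u T₄) ≤ c.hh t := by
        have := c.hh_ge_v1u t
        nlinarith
      have hsecond : (1/2 : ℝ) * ((3:ℝ)/4 * (1 - c.u T₄)) ≤ (1 - c.p t) * c.hh t :=
        mul_le_mul (by linarith) hhge (by nlinarith) (by linarith)
      unfold yB
      nlinarith
  obtain ⟨c₃, hc₃pos, T₅, hT₅ge, hyB⟩ := key
  set q₁ := 4/c₃ with hq₁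
  set q₂ := 2 * c.L/c.m with hq₂
  have hq₁pos : 0 < q₁ := by rw [hq₁]; positivity
  have hq₂pos : 0 < q₂ := by rw [hq₂]; positivity
  have hQd : ∀ t, HasDerivAt (fun t => q₁ * (1 - c.v t) + q₂ * c.w t)
      (q₁ * (0 - c.v t * (1 - c.v t) * c.yB t)
        + q₂ * (c.w t * (1 - c.w t) * (-(c.fw t) * c.hh t))) t :=
    fun t => (((hasDerivAt_const t 1).sub (c.hv' t)).const_mul q₁).add ((c.hw' t).const_mul q₂)
  -- pointwise facts on the tail
  have hfacts : ∀ t, T₅ ≤ t →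
      (q₁ * (0 - c.v t * (1 - c.v t) * c.yB t)
        + q₂ * (c.w t * (1 - c.w t) * (-(c.fw t) * c.hh t))
        ≤ -(3 * (1 - c.v t)) - c.L * c.w t * c.hh t)
      ∧ |c.xA t| ≤ 3 * (1 - c.v t) + c.L * c.w t * c.hh t := by
    intro t ht
    have htT₄ : T₄ ≤ t := le_trans hT₅ge ht
    have h1 := c.u0 t; have h2 := c.u1 t; have h3 := c.v0 t; have h4 := c.v1 t
    have h5 := c.hh_pos t; have hw0 := c.w0 t; have hw1 := hw12 t htT₄
    have hfwge := c.fw_ge t; have hp0 := c.p_nn t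
    have hpw := hple t
    have hyBt := hyB t ht
    have hv34 : (3:ℝ)/4 ≤ c.v t := by linarith [hv64 t htT₄]
    constructor
    · have A1 : 3 * (1 - c.v t) ≤ q₁ * (c.v t * (1 - c.v t) * c.yB t) := by
        have e1 : (3:ℝ)/4 * c₃ ≤ c.v t * c.yB t :=
          mul_le_mul hv34 hyBt hc₃pos.le (by linarith)
        have e2 : q₁ * ((3:ℝ)/4 * c₃) = 3 := by rw [hq₁]; field_simp
        have e3 : q₁ * ((3:ℝ)/4 * c₃) * (1 - c.v t) ≤ q₁ * (c.v t * c.yB t) * (1 - c.v t) := by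
          apply mul_le_mul_of_nonneg_right _ (by linarith)
          exact mul_le_mul_of_nonneg_left e1 hq₁pos.le
        rw [e2] at e3
        nlinarith
      have A2 : c.L * c.w t * c.hh t ≤ q₂ * (c.w t * (1 - c.w t) * (c.fw t * c.hh t)) := by
        have e5 : (1/2 : ℝ) * c.m ≤ (1 - c.w t) * c.fw t :=
          mul_le_mul (by linarith) hfwge hm.le (by linarith)
        rw [hq₂, div_mul_eq_mul_div, le_div_iff₀ hm]
        nlinarith [mul_le_mul_of_nonneg_left e5
          (show (0:ℝ) ≤ 2 * c.L * (c.w t * c.hh t) by positivity)]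
      nlinarith [A1, A2]
    · have habs3 : |3 - 4 * c.u t| ≤ 3 := by rw [abs_le]; constructor <;> linarith
      have hB1 : (1 - c.v t) * |3 - 4 * c.u t| ≤ 3 * (1 - c.v t) := by nlinarith
      have hB2 : 0 ≤ c.p t * c.hh t := mul_nonneg hp0 h5.le
      have hB3 : c.p t * c.hh t ≤ c.L * c.w t * c.hh t :=
        mul_le_mul_of_nonneg_right hpw h5.le
      have hml := mul_le_mul_of_nonneg_left (neg_abs_le (3 - 4 * c.u t))
        (by linarith : (0:ℝ) ≤ 1 - c.v t)
      have hmu := mul_le_mul_of_nonneg_left (le_abs_self (3 - 4 * c.u t))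
        (by linarith : (0:ℝ) ≤ 1 - c.v t)
      rw [abs_le]
      unfold xA
      constructor
      · nlinarith [hml, hB1, hB3]
      · nlinarith [hmu, hB1, hB2]
  -- sandwich : xx - Q nondecreasing, xx + Q nonincreasing
  have hEm : MonotoneOn (fun t => c.xx t - (q₁ * (1 - c.v t) + q₂ * c.w t)) (Ici T₅) := by
    refine monoTail (fun t => (c.hx t).sub (hQd t)) (fun t ht => ?_)
    have h := hfacts t ht
    have h2 := abs_le.1 h.2
    linarith [h.1, h2.1]
  have hEp : AntitoneOn (fun t => c.xx t + (q₁ * (1 - c.v t) + q₂ * c.w t)) (Ici T₅) := by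
    refine antiTail (fun t => (c.hx t).add (hQd t)) (fun t ht => ?_)
    have h := hfacts t ht
    have h2 := abs_le.1 h.2
    linarith [h.1, h2.2]
  have hQ0 : ∀ t, 0 ≤ q₁ * (1 - c.v t) + q₂ * c.w t := fun t =>
    add_nonneg (mul_nonneg hq₁pos.le (by linarith [c.v1 t])) (mul_nonneg hq₂pos.le (c.w0 t).le)
  have hbd : ∀ t, T₅ ≤ t → c.xx t - (q₁ * (1 - c.v t) + q₂ * c.w t)
      ≤ c.xx T₅ + (q₁ * (1 - c.v T₅) + q₂ * c.w T₅) := by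
    intro t ht
    have h1 : c.xx t + (q₁ * (1 - c.v t) + q₂ * c.w t)
        ≤ c.xx T₅ + (q₁ * (1 - c.v T₅) + q₂ * c.w T₅) :=
      hEp self_mem_Ici (mem_Ici.2 ht) ht
    have := hQ0 t
    linarith
  obtain ⟨lmin, -, -, htenE⟩ := tendsto_of_monoTail hEm hbd
  have hQten : Tendsto (fun t => q₁ * (1 - c.v t) + q₂ * c.w t) atTop (𝓝 0) := by
    have h0 : Tendsto (fun t => q₁ * (1 - c.v t) + q₂ * c.w t) atTop
        (𝓝 (q₁ * (1 - 1) + q₂ * 0)) :=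
      ((tendsto_const_nhds.sub (c.v_tendsto h34)).const_mul q₁).add
        ((c.w_tendsto).const_mul q₂)
    simpa using h0
  have htenxx : Tendsto c.xx atTop (𝓝 lmin) := by
    have h0 : Tendsto (fun t => (c.xx t - (q₁ * (1 - c.v t) + q₂ * c.w t))
        + (q₁ * (1 - c.v t) + q₂ * c.w t)) atTop (𝓝 (lmin + 0)) := htenE.add hQten
    simpa using h0
  refine ⟨Real.exp lmin / (1 + Real.exp lmin), ⟨by positivity, ?_⟩, c.u_tendsto_of_xx htenxx⟩
  rw [div_le_one (by positivity)]
  linarith [Real.exp_pos lmin]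

end Orb
end S13

/-- If `0 < n₀ ≤ 3`, every interior orbit converges to
`B₂ = (0,1,0)` as `λ → ∞`; if `n₀ = 0`, every interior orbit converges to a point of
the line `L₄ = {(U,1,0) : U ∈ [0,1]}` as `λ → ∞`. -/
theorem stmt13
    (Υ σ f : ℝ → ℝ)
    (hΥ : ContDiffOn ℝ 1 Υ (Icc 0 1)) (hσ : ContDiffOn ℝ 1 σ (Icc 0 1))
    (hf : ContDiffOn ℝ 1 f (Icc 0 1))
    (hfpos : ∀ x ∈ Icc (0:ℝ) 1, 0 < f x)
    (hσnonneg : ∀ x ∈ Icc (0:ℝ) 1, 0 ≤ σ x)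
    (hΥnonneg : ∀ x ∈ Icc (0:ℝ) 1, 0 ≤ Υ x)
    (n₀ γ₁ : ℝ) (hn₀ : 0 ≤ n₀) (hγ₁ : 1 < γ₁) (hγ₁' : γ₁ ≤ 2)
    (hΥ0 : Υ 0 = n₀ / (n₀ + 1)) (hΥ1 : Υ 1 = 1)
    (hσ0 : σ 0 = 0) (hσ1 : σ 1 = γ₁ - 1)
    (hf0 : 0 < f 0) (hf1 : 0 < f 1)
    (U V W : ℝ → ℝ)
    (hU : ∀ l : ℝ, HasDerivAt U (Ffield Υ σ f (U l) (V l) (W l)).1 l)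
    (hV : ∀ l : ℝ, HasDerivAt V (Ffield Υ σ f (U l) (V l) (W l)).2.1 l)
    (hW : ∀ l : ℝ, HasDerivAt W (Ffield Υ σ f (U l) (V l) (W l)).2.2 l)
    (hint : ∀ l : ℝ, U l ∈ Ioo (0:ℝ) 1 ∧ V l ∈ Ioo (0:ℝ) 1 ∧ W l ∈ Ioo (0:ℝ) 1) :
    (0 < n₀ → n₀ ≤ 3 →
      Filter.Tendsto (fun l => (U l, V l, W l)) Filter.atTop
        (nhds ((0 : ℝ), (1 : ℝ), (0 : ℝ)))) ∧
    (n₀ = 0 →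
      ∃ Uinf ∈ Icc (0:ℝ) 1,
        Filter.Tendsto (fun l => (U l, V l, W l)) Filter.atTop
          (nhds (Uinf, (1 : ℝ), (0 : ℝ)))) := by
  have hIne : (Icc (0:ℝ) 1).Nonempty := ⟨0, by norm_num⟩
  obtain ⟨xm, hxmIcc, hxm⟩ := isCompact_Icc.exists_isMinOn hIne hf.continuousOn
  obtain ⟨xM, hxMIcc, hxM⟩ := isCompact_Icc.exists_isMaxOn hIne hf.continuousOn
  obtain ⟨xS, hxSIcc, hxS⟩ := isCompact_Icc.exists_isMaxOn hIne hσ.continuousOn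
  obtain ⟨xP, hxPIcc, hxP⟩ := isCompact_Icc.exists_isMaxOn hIne hΥ.continuousOn
  have hσd : DifferentiableOn ℝ σ (Icc 0 1) := hσ.differentiableOn one_ne_zero
  have hΥd : DifferentiableOn ℝ Υ (Icc 0 1) := hΥ.differentiableOn one_ne_zero
  have hσdc : ContinuousOn (derivWithin σ (Icc 0 1)) (Icc 0 1) :=
    hσ.continuousOn_derivWithin (uniqueDiffOn_Icc zero_lt_one) le_rfl
  have hΥdc : ContinuousOn (derivWithin Υ (Icc 0 1)) (Icc 0 1) :=
    hΥ.continuousOn_derivWithin (uniqueDiffOn_Icc zero_lt_one) le_rfl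
  obtain ⟨Lσ, hLσ⟩ := isCompact_Icc.exists_bound_of_continuousOn hσdc
  obtain ⟨LΥ, hLΥ⟩ := isCompact_Icc.exists_bound_of_continuousOn hΥdc
  have hLσ0 : 0 ≤ Lσ := le_trans (norm_nonneg _) (hLσ 0 (by norm_num))
  have hLpos : 0 < max Lσ LΥ + 1 := by
    have := le_max_left Lσ LΥ; linarith
  have hσlip := norm_image_sub_le_of_norm_deriv_le_segment hσd
    (fun y hy => hLσ y (Ico_subset_Icc_self hy))
  have hΥlip := norm_image_sub_le_of_norm_deriv_le_segment hΥd
    (fun y hy => hLΥ y (Ico_subset_Icc_self hy))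
  set L := max Lσ LΥ + 1 with hLdef
  have hsigL : ∀ x ∈ Icc (0:ℝ) 1, σ x ≤ L * x := by
    intro x hx
    have h := hσlip x hx
    rw [hσ0, sub_zero, sub_zero, Real.norm_eq_abs] at h
    have h2 : |σ x| ≤ L * x := by
      have h3 : Lσ * x ≤ L * x :=
        mul_le_mul_of_nonneg_right (by rw [hLdef]; linarith [le_max_left Lσ LΥ]) hx.1
      linarith
    linarith [le_abs_self (σ x)]
  have hUpsL : ∀ x ∈ Icc (0:ℝ) 1, |Υ x - Υ 0| ≤ L * x := by
    intro x hx
    have h := hΥlip x hx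
    rw [sub_zero, Real.norm_eq_abs] at h
    have h3 : LΥ * x ≤ L * x :=
      mul_le_mul_of_nonneg_right (by rw [hLdef]; linarith [le_max_right Lσ LΥ]) hx.1
    linarith
  let c : S13.Orb :=
    { Ups := Υ, sig := σ, ff := f, u := U, v := V, w := W,
      hσnn := hσnonneg, hΥnn := hΥnonneg,
      hu := fun t => by simpa [Ffield, Hfun] using hU t,
      hv := fun t => by simpa [Ffield, Hfun] using hV t,
      hw := fun t => by simpa [Ffield, Hfun] using hW t,
      hint := hint,
      m := f xm, Mf := f xM, S := σ xS, P := Υ xP, L := L,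
      hm := hfpos xm hxmIcc,
      hmf := fun x hx => hxm hx,
      hMf := fun x hx => hxM hx,
      hS := fun x hx => hxS hx,
      hP := fun x hx => hxP hx,
      hL := hLpos,
      hsigL := hsigL, hUpsL := hUpsL }
  constructor
  · intro hn0pos hn03
    have h34 : Υ 0 ≤ 3/4 := by
      rw [hΥ0, div_le_iff₀ (by linarith : (0:ℝ) < n₀ + 1)]
      linarith
    have hpos : 0 < Υ 0 := by
      rw [hΥ0]; positivity
    exact (c.u_to_zero h34 hpos).prodMk_nhds
      ((c.v_tendsto h34).prodMk_nhds c.w_tendsto)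
  · intro hn0
    have hU0 : Υ 0 = 0 := by rw [hΥ0, hn0]; norm_num
    obtain ⟨l, hl, hlt⟩ := c.u_converges hU0
    exact ⟨l, hl, hlt.prodMk_nhds
      ((c.v_tendsto (show Υ 0 ≤ 3/4 by rw [hU0]; norm_num)).prodMk_nhds c.w_tendsto)⟩
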